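/- Define the Atkin-like polynomials A_{n,6}(X) by A_{0,6}=1, A_{1,6}(X)=X-1266, and A_{n+1,6}(X) = (X - a_{n+1/2,0})A_{n,6}(X) - b_{n+1/2,0}A_{n-1,6}(X) for n ≥ 1, where a_{m,0} = 24(144m²-41)/((2m+1)(2m-1)) and b_{m,0} = 36(12m-11)(12m-7)(12m-5)(12m-1)/(m(m-1)(2m-1)²) evaluated at m = n+1/2. Then A_{n,6}(1728) = 12^{3n} (7/12)_n (11/12)_n / (2n)! for all n ≥ 0. -/

import Mathlib

open Polynomial

/-- Recursion coefficient `a_{n,6} = a_{n+1/2,0} = 24(144(n+1/2)²-41)/((2n+2)(2n))`. -/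
noncomputable def a6 (n : ℕ) : ℚ :=
  24 * (144 * ((n : ℚ) + 1 / 2) ^ 2 - 41) / ((2 * (n : ℚ) + 2) * (2 * (n : ℚ)))

/-- Recursion coefficient `b_{n,6} = b_{n+1/2,0} = 36(12n-5)(12n-1)(12n+1)(12n+5)/((n+1/2)(n-1/2)(2n)²)`. -/
noncomputable def b6 (n : ℕ) : ℚ :=
  36 * (12 * (n : ℚ) - 5) * (12 * (n : ℚ) - 1) * (12 * (n : ℚ) + 1) * (12 * (n : ℚ) + 5) /
    (((n : ℚ) + 1 / 2) * ((n : ℚ) - 1 / 2) * (2 * (n : ℚ)) ^ 2)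

/-- The monic Atkin-like polynomials `A_{n,6}(X)`, defined by the three-term recursion
`A_{n+1,6} = (X - a_{n+1/2,0})A_{n,6} - b_{n+1/2,0} A_{n-1,6}` for `n ≥ 1`. -/
noncomputable def A6 : ℕ → Polynomial ℚ
  | 0 => 1
  | 1 => X - C 1266
  | n + 2 => (X - C (a6 (n + 1))) * A6 (n + 1) - C (b6 (n + 1)) * A6 n

set_option maxHeartbeats 1000000 in
/-- `A_{n,6}(1728) = 12^{3n} (7/12)ₙ (11/12)ₙ / (2n)!` for all `n ≥ 0`. -/
theorem A6_eval_1728 (n : ℕ) :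
    (A6 n).eval 1728 =
      (12 : ℚ) ^ (3 * n) * (ascPochhammer ℚ n).eval (7 / 12 : ℚ) *
        (ascPochhammer ℚ n).eval (11 / 12 : ℚ) / ((2 * n).factorial : ℚ) := by
  induction n using Nat.twoStepInduction with
  | zero => simp [A6]
  | one => norm_num [A6, ascPochhammer_one]
  | more n ih0 ih1 =>
    have h2 : 2 * (n + 2) = (2 * n + 3) + 1 := by ring
    have h2' : 2 * n + 3 = (2 * n + 2) + 1 := by ring
    have h2'' : 2 * n + 2 = (2 * n + 1) + 1 := by ring
    have h1 : 2 * (n + 1) = 2 * n + 1 + 1 := by ring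
    have e31 : 3 * (n + 1) = 3 * n + 3 := by ring
    have e32 : 3 * (n + 2) = 3 * n + 6 := by ring
    simp only [A6, eval_sub, eval_mul, eval_X, eval_C, ih0, ih1, h1, h2, h2', h2'', e31, e32,
      ascPochhammer_succ_right, eval_mul, eval_add, eval_X, eval_natCast,
      Nat.factorial_succ, pow_add]
    have hF : ((2*n).factorial : ℚ) ≠ 0 := by exact_mod_cast (2*n).factorial_ne_zero
    simp only [a6, b6]
    push_cast
    have hn1 : (n:ℚ) + 1 ≠ 0 := by positivity
    have hn2 : (n:ℚ) + 2 ≠ 0 := by positivity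
    have hq1 : 2*(n:ℚ) + 1 ≠ 0 := by positivity
    have hq3 : 2*(n:ℚ) + 3 ≠ 0 := by positivity
    have hd : ((2*((n:ℚ)+1)+2)*(2*((n:ℚ)+1))) ≠ 0 := by
      apply mul_ne_zero <;> intro h
      · apply hn2; linarith
      · apply hn1; linarith
    have he : ((2*(n:ℚ)+1+1)*((2*(n:ℚ)+1)*((2*n).factorial : ℚ))) ≠ 0 := by
      apply mul_ne_zero (by intro h; apply hn1; linarith) (mul_ne_zero hq1 hF)
    have hf2 : (((n:ℚ)+1+1/2)*((n:ℚ)+1-1/2)*(2*((n:ℚ)+1))^2) ≠ 0 := by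
      apply mul_ne_zero (mul_ne_zero ?_ ?_) (pow_ne_zero _ ?_) <;> intro h
      · apply hq3; linarith
      · apply hq1; linarith
      · apply hn1; linarith
    have hD : ((2*(n:ℚ)+2+1+1)*((2*(n:ℚ)+2+1)*((2*(n:ℚ)+1+1)*((2*(n:ℚ)+1)*((2*n).factorial : ℚ))))) ≠ 0 := by
      apply mul_ne_zero (by intro h; apply hn2; linarith)
        (mul_ne_zero (by intro h; apply hq3; linarith) he)
    rw [sub_div' hd, div_mul_div_comm, div_mul_div_comm,
      div_sub_div _ _ (mul_ne_zero hd he) (mul_ne_zero hf2 hF),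
      div_eq_div_iff (mul_ne_zero (mul_ne_zero hd he) (mul_ne_zero hf2 hF)) hD]
    ring
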